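/- Let K be a field, V a finite-dimensional K-vector space, N : V → V a nilpotent K-linear endomorphism, and (M_j)_{j∈ℤ} a monodromy filtration for N. Then M_{-1} ⊆ range N. -/
import Mathlib


/-- A monodromy filtration for a nilpotent endomorphism `N` of a vector space `V`:
an increasing, exhaustive and separated filtration `M` indexed by `ℤ` with
`N (M j) ⊆ M (j - 2)`, such that for every `j ≥ 1` the map induced by `N ^ j` gives an
isomorphism `M j / M (j-1) ≅ M (-j) / M (-j-1)`. -/
def IsMonodromyFiltration {K V : Type*} [Field K] [AddCommGroup V] [Module K V]
    (N : V →ₗ[K] V) (M : ℤ → Submodule K V) : Prop :=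
  (∀ j : ℤ, M j ≤ M (j + 1)) ∧
  (∃ a : ℤ, ∀ j : ℤ, j ≤ a → M j = ⊥) ∧
  (∃ b : ℤ, ∀ j : ℤ, b ≤ j → M j = ⊤) ∧
  (∀ j : ℤ, (M j).map N ≤ M (j - 2)) ∧
  (∀ j : ℕ, 1 ≤ j →
    (∀ x : V, x ∈ M (j : ℤ) → (N ^ j) x ∈ M (-(j : ℤ))) ∧
    (∀ x : V, x ∈ M (j : ℤ) → (N ^ j) x ∈ M (-(j : ℤ) - 1) → x ∈ M ((j : ℤ) - 1)) ∧
    (∀ y : V, y ∈ M (-(j : ℤ)) → ∃ x ∈ M (j : ℤ), (N ^ j) x - y ∈ M (-(j : ℤ) - 1)))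

/-- For a monodromy filtration of a nilpotent endomorphism, `M (-1) ⊆ range N`. -/
theorem monodromyFiltration_le_range {K V : Type*} [Field K] [AddCommGroup V] [Module K V]
    [FiniteDimensional K V] (N : V →ₗ[K] V) (hN : IsNilpotent N)
    (M : ℤ → Submodule K V) (hM : IsMonodromyFiltration N M) :
    M (-1) ≤ LinearMap.range N := by
  obtain ⟨hmono, ⟨a, ha⟩, ⟨b, hb⟩, hN2, hiso⟩ := hM
  set c : ℕ := (max 1 (-a - 1)).toNat with hc
  have hcz : (c : ℤ) = max 1 (-a - 1) :=
    Int.toNat_of_nonneg (le_trans zero_le_one (le_max_left _ _))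
  have hc1 : (1 : ℤ) ≤ (c : ℤ) := by rw [hcz]; exact le_max_left _ _
  have hca : -(c : ℤ) - 1 ≤ a := by
    have := le_max_right 1 (-a - 1); omega
  have key : ∀ n : ℕ, n ≤ c → M (-(c : ℤ) - 1 + n) ≤ LinearMap.range N := by
    intro n
    induction n with
    | zero =>
      intro _
      rw [ha (-(c : ℤ) - 1 + (0 : ℕ)) (by push_cast; omega)]
      exact bot_le
    | succ n ih =>
      intro hn
      have hj : 1 ≤ c - n := by omega
      obtain ⟨h1, h2, h3⟩ := hiso (c - n) hj
      intro y hy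
      have hyM : y ∈ M (-((c - n : ℕ) : ℤ)) := by
        have he : (-((c - n : ℕ) : ℤ)) = -(c : ℤ) - 1 + ((n + 1 : ℕ) : ℤ) := by
          have : ((c - n : ℕ) : ℤ) = (c : ℤ) - n := by
            rw [Nat.cast_sub (by omega)]
          push_cast [this]; ring
        rw [he]; exact hy
      obtain ⟨x, hx, hdiff⟩ := h3 y hyM
      have h1' : (N ^ (c - n)) x ∈ LinearMap.range N := by
        obtain ⟨k, hk⟩ : ∃ k, c - n = k + 1 := ⟨c - n - 1, by omega⟩
        rw [hk, pow_succ']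
        exact ⟨(N ^ k) x, rfl⟩
      have h2' : (N ^ (c - n)) x - y ∈ LinearMap.range N := by
        apply ih (by omega)
        have he : (-((c - n : ℕ) : ℤ) - 1) = -(c : ℤ) - 1 + (n : ℤ) := by
          have : ((c - n : ℕ) : ℤ) = (c : ℤ) - n := by
            rw [Nat.cast_sub (by omega)]
          rw [this]; ring
        rw [← he]; exact hdiff
      have hy' : y = (N ^ (c - n)) x - ((N ^ (c - n)) x - y) := (sub_sub_cancel _ _).symm
      rw [hy']
      exact sub_mem h1' h2'
  have h := key c le_rfl
  have he : -(c : ℤ) - 1 + (c : ℕ) = -1 := by omega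
  rwa [he] at h
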